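/- arXiv:1201.0931 — 2 statements merged into one kernel-verified Lean document; each statement's English description precedes it below -/
import Mathlib

section
/- Let k ≥ 1, a ≥ 1, b ≥ 0 and c ≥ 1 be integers, d := gcd(a, b), a' := a/d, and let p be a prime such that p | c·L_k and p | a'. Then the smallest period of g_{p,k,φ} is P_{p,k,φ} = (∏_{q ∈ A} q) · (∏_{q ∈ B} q), where A is the set of primes q with q ∤ ac, q | L_k, p | (q − 1) and k + 1 ≢ 0 (mod q), and B is the set of primes q with q ∤ a, q | c and p | (q − 1). -/
/-- `L k = lcm (1, 2, …, k)`. -/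
def Lk (k : ℕ) : ℕ := (Finset.Icc 1 k).lcm id

/-- `g_{k,φ} (n) = (∏_{i=0}^{k} φ (b + a (n + i c))) / φ (lcm_{0 ≤ i ≤ k} (b + a (n + i c)))`. -/
def gkphi (k a b c n : ℕ) : ℚ :=
  (∏ i ∈ Finset.range (k + 1), ((b + a * (n + i * c)).totient : ℚ)) /
    (((Finset.range (k + 1)).lcm fun i => b + a * (n + i * c)).totient : ℚ)

/-- A (not necessarily least) period for functions on positive integers. -/
def PerNat (F : ℕ → ℕ) (T : ℕ) : Prop := ∀ n, 1 ≤ n → F (n + T) = F n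

lemma perNat_mul {F : ℕ → ℕ} {T : ℕ} (h : PerNat F T) (m : ℕ) : PerNat F (T * m) := by
  induction m with
  | zero => intro n hn; simp
  | succ m ih =>
      intro n hn
      have : n + T * (m + 1) = (n + T * m) + T := by ring
      rw [this, h _ (by omega), ih n hn]

lemma perNat_of_dvd {F : ℕ → ℕ} {T S : ℕ} (h : PerNat F T) (hTS : T ∣ S) : PerNat F S := by
  obtain ⟨m, rfl⟩ := hTS; exact perNat_mul h m

lemma perNat_gcd {F : ℕ → ℕ} {T₁ T₂ : ℕ} (h₁ : PerNat F T₁) (h₂ : PerNat F T₂)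
    (hT₁ : 0 < T₁) (hT₂ : 0 < T₂) : PerNat F (Nat.gcd T₁ T₂) := by
  set g := Nat.gcd T₁ T₂ with hg
  have hgpos : 0 < g := Nat.gcd_pos_of_pos_left _ hT₁
  set u := T₁ / g with hu
  set v := T₂ / g with hv
  have hT₁e : T₁ = g * u := (Nat.mul_div_cancel' (Nat.gcd_dvd_left _ _)).symm
  have hT₂e : T₂ = g * v := (Nat.mul_div_cancel' (Nat.gcd_dvd_right _ _)).symm
  have hco : Nat.Coprime u v := Nat.coprime_div_gcd_div_gcd hgpos
  have hupos : 0 < u := by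
    rcases Nat.eq_zero_or_pos u with h | h
    · exfalso; rw [h, Nat.mul_zero] at hT₁e; omega
    · exact h
  have hvpos : 0 < v := by
    rcases Nat.eq_zero_or_pos v with h | h
    · exfalso; rw [h, Nat.mul_zero] at hT₂e; omega
    · exact h
  set t := Nat.totient v with ht
  have htpos : 0 < t := Nat.totient_pos.mpr hvpos
  have hmod : u ^ t ≡ 1 [MOD v] := Nat.ModEq.pow_totient hco
  have hpow1 : 1 ≤ u ^ t := Nat.one_le_pow _ _ hupos
  have hdvd : v ∣ u ^ t - 1 := (Nat.modEq_iff_dvd' hpow1).mp hmod.symm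
  obtain ⟨y, hy⟩ := hdvd
  -- u^t = 1 + v*y
  have hue : u ^ t = 1 + v * y := by omega
  intro n hn
  have key : n + g + T₂ * y = n + T₁ * u ^ (t - 1) := by
    have : T₁ * u ^ (t - 1) = g * u ^ t := by
      rw [hT₁e]
      have : u * u ^ (t - 1) = u ^ t := by
        rw [← pow_succ']
        congr 1; omega
      rw [mul_assoc, this]
    rw [this, hue, hT₂e]; ring
  calc F (n + g) = F (n + g + T₂ * y) := (perNat_mul h₂ y (n + g) (by omega)).symm
    _ = F (n + T₁ * u ^ (t - 1)) := by rw [key]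
    _ = F n := perNat_mul h₁ _ n hn

lemma perNat_one_const {F : ℕ → ℕ} (h : PerNat F 1) : ∀ n, 1 ≤ n → F n = F 1 := by
  intro n hn
  induction n with
  | zero => omega
  | succ m ih =>
      rcases Nat.eq_zero_or_pos m with h0 | h0
      · subst h0; rfl
      · rw [← ih h0]; exact h m h0

/-- positivity of a finset lcm of positive numbers -/
lemma finset_lcm_pos {α : Type*} (s : Finset α) (f : α → ℕ)
    (h : ∀ i ∈ s, 0 < f i) : 0 < s.lcm f := by
  classical
  induction s using Finset.induction_on with
  | empty => simp [Finset.lcm_empty]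
  | @insert a s' hx ih =>
      rw [Finset.lcm_insert]
      have h1 : 0 < f a := h a (Finset.mem_insert_self _ _)
      have h2 : 0 < s'.lcm f := ih (fun i hi => h i (Finset.mem_insert_of_mem hi))
      exact Nat.lcm_pos h1 h2

lemma prime_dvd_finset_lcm {α : Type*} {q : ℕ} (hq : q.Prime) (s : Finset α) (f : α → ℕ) :
    q ∣ s.lcm f ↔ ∃ i ∈ s, q ∣ f i := by
  classical
  induction s using Finset.induction_on with
  | empty =>
      simp only [Finset.lcm_empty, Finset.notMem_empty]
      constructor
      · intro h; exact absurd (Nat.eq_one_of_dvd_one h) hq.one_lt.ne'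
      · rintro ⟨i, hi, -⟩; exact absurd hi (by simp)
  | @insert a s' hx ih =>
      rw [Finset.lcm_insert]
      constructor
      · intro h
        have hdvd : Nat.lcm (f a) (s'.lcm f) ∣ f a * s'.lcm f :=
          Nat.lcm_dvd (dvd_mul_right _ _) (dvd_mul_left _ _)
        have := (Nat.Prime.dvd_mul hq).mp (h.trans hdvd)
        rcases this with h | h
        · exact ⟨a, Finset.mem_insert_self _ _, h⟩
        · obtain ⟨i, hi, hdi⟩ := ih.mp h
          exact ⟨i, Finset.mem_insert_of_mem hi, hdi⟩
      · rintro ⟨i, hi, hdi⟩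
        rcases Finset.mem_insert.mp hi with rfl | hi'
        · exact hdi.trans (Nat.dvd_lcm_left _ _)
        · exact (hdi.trans (Finset.dvd_lcm hi')).trans (Nat.dvd_lcm_right _ _)

lemma finset_lcm_factorization_eq {α : Type*} {p e : ℕ} (s : Finset α) (f : α → ℕ)
    (hne : s.Nonempty) (h0 : ∀ i ∈ s, f i ≠ 0) (he : ∀ i ∈ s, (f i).factorization p = e) :
    (s.lcm f).factorization p = e := by
  classical
  induction s using Finset.induction_on with
  | empty => exact absurd hne (by simp)
  | @insert a s' hx ih =>
      rw [Finset.lcm_insert]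
      have hlcm : ∀ x y : ℕ, lcm x y = Nat.lcm x y := fun _ _ => rfl
      rcases Finset.eq_empty_or_nonempty s' with rfl | hs'
      · simp only [Finset.lcm_empty, hlcm, Nat.lcm_one_right]
        exact he a (Finset.mem_insert_self _ _)
      · have h1 : f a ≠ 0 := h0 a (Finset.mem_insert_self _ _)
        have h2 : s'.lcm f ≠ 0 := by
          have := finset_lcm_pos s' f (fun i hi => Nat.pos_of_ne_zero (h0 i (Finset.mem_insert_of_mem hi)))
          omega
        rw [hlcm, Nat.factorization_lcm h1 h2]
        rw [Finsupp.sup_apply]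
        have ha : (f a).factorization p = e := he a (Finset.mem_insert_self _ _)
        have hb : (s'.lcm f).factorization p = e :=
          ih hs' (fun i hi => h0 i (Finset.mem_insert_of_mem hi))
            (fun i hi => he i (Finset.mem_insert_of_mem hi))
        rw [ha, hb]; exact sup_idem e

lemma totient_fact {p m : ℕ} (hp : p.Prime) (hm : m ≠ 0) :
    (Nat.totient m).factorization p =
      (m.factorization p - 1) + ∑ q ∈ m.primeFactors, (q - 1).factorization p := by
  rw [Nat.totient_eq_prod_factorization hm]
  rw [Finsupp.prod]
  rw [Nat.factorization_prod (by
    intro q hq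
    rw [Nat.support_factorization] at hq
    have hq2 : 2 ≤ q := (Nat.prime_of_mem_primeFactors hq).two_le
    exact Nat.mul_ne_zero (pow_ne_zero _ (by omega)) (by omega))]
  rw [Finset.sum_apply']
  have key : ∀ q ∈ m.factorization.support,
      (q ^ (m.factorization q - 1) * (q - 1)).factorization p =
        (if q = p then m.factorization q - 1 else 0) + (q - 1).factorization p := by
    intro q hq
    rw [Nat.support_factorization] at hq
    have hqp : q.Prime := Nat.prime_of_mem_primeFactors hq
    have h1 : q ^ (m.factorization q - 1) ≠ 0 := pow_ne_zero _ hqp.pos.ne'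
    have h2 : q - 1 ≠ 0 := by have := hqp.two_le; omega
    rw [Nat.factorization_mul h1 h2, Finsupp.add_apply, hqp.factorization_pow,
      Finsupp.single_apply]
  rw [Finset.sum_congr rfl key, Finset.sum_add_distrib]
  congr 1
  · rw [Finset.sum_ite_eq' m.factorization.support p (fun q => m.factorization q - 1)]
    split_ifs with h
    · rfl
    · rw [Finsupp.notMem_support_iff] at h
      omega

/-- counting: #{i < K : i % q = r} = (K + (q - 1 - r)) / q, for r < q. -/
lemma count_res (K q r : ℕ) (hr : r < q) :
    ((Finset.range K).filter (fun i => i % q = r)).card = (K + (q - 1 - r)) / q := by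
  induction K with
  | zero =>
      simp only [Finset.range_zero, Finset.filter_empty, Finset.card_empty, Nat.zero_add]
      symm; apply Nat.div_eq_of_lt; omega
  | succ K ih =>
      rw [Finset.range_add_one, Finset.filter_insert]
      have hdvd_iff : q ∣ K + (q - 1 - r) + 1 ↔ K % q = r := by
        have hKe : K = q * (K / q) + K % q := (Nat.div_add_mod K q).symm
        have hKm : K % q < q := Nat.mod_lt _ (by omega)
        constructor
        · rintro ⟨t, ht⟩
          have h1 : q * t = q * (K / q) + (K % q + q - r) := by omega
          have h2 : q ∣ K % q + q - r := by
            have he : q * t - q * (K / q) = K % q + q - r := by omega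
            rw [← he]
            exact Nat.dvd_sub (Dvd.intro t rfl) (Dvd.intro (K / q) rfl)
          obtain ⟨s, hs⟩ := h2
          have hlb : 0 < K % q + q - r := by omega
          have hub : K % q + q - r < 2 * q := by omega
          have hspos : 1 ≤ s := by
            by_contra hcon; push_neg at hcon
            interval_cases s
            omega
          have hslt : s < 2 := by
            by_contra hcon; push_neg at hcon
            have : q * 2 ≤ q * s := Nat.mul_le_mul_left q hcon
            omega
          have hs1 : s = 1 := by omega
          subst hs1
          omega
        · intro h
          refine ⟨K / q + 1, ?_⟩
          have hd : q * (K / q + 1) = q * (K / q) + q := by ring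
          omega
      have hre : K + 1 + (q - 1 - r) = K + (q - 1 - r) + 1 := by omega
      rw [hre, Nat.succ_div]
      by_cases h : K % q = r
      · rw [if_pos h, Finset.card_insert_of_notMem (by simp), ih,
          if_pos (hdvd_iff.mpr h)]
      · rw [if_neg h, ih, if_neg (fun hc => h (hdvd_iff.mp hc))]
        omega

/-- number of i ∈ [0,k] with q ∣ b + a(n+ic) -/
def NqF (k a b c q n : ℕ) : ℕ :=
  ((Finset.range (k+1)).filter (fun i => q ∣ b + a*(n+i*c))).card

lemma NqF_mod {k a b c q n m : ℕ} (h : n % q = m % q) :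
    NqF k a b c q n = NqF k a b c q m := by
  unfold NqF
  congr 1
  apply Finset.filter_congr
  intro i _
  have hme : (b + a*(n+i*c)) % q = (b + a*(m+i*c)) % q := by
    have : (n : ℕ) ≡ m [MOD q] := h
    exact (Nat.ModEq.add_left b (Nat.ModEq.mul_left a (Nat.ModEq.add_right (i*c) this)))
  rw [Nat.dvd_iff_mod_eq_zero, Nat.dvd_iff_mod_eq_zero, hme]

def rhoF (a b c q n : ℕ) : ZMod q :=
  (-((b : ZMod q) + (a : ZMod q) * (n : ZMod q))) * ((a : ZMod q) * (c : ZMod q))⁻¹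

lemma dvd_iff_res {a b c q : ℕ} (hq : q.Prime) (hqac : ¬ q ∣ a * c) (n i : ℕ) :
    (q ∣ b + a*(n + i*c)) ↔ i % q = (rhoF a b c q n).val := by
  haveI : Fact q.Prime := ⟨hq⟩
  haveI : NeZero q := ⟨hq.ne_zero⟩
  have hA : (a : ZMod q) * (c : ZMod q) ≠ 0 := by
    intro h
    apply hqac
    have : ((a * c : ℕ) : ZMod q) = 0 := by push_cast; exact h
    exact (ZMod.natCast_eq_zero_iff _ _).mp this
  rw [← ZMod.natCast_eq_zero_iff]
  have hcast : ((b + a*(n + i*c) : ℕ) : ZMod q) =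
      ((b : ZMod q) + (a : ZMod q) * (n : ZMod q)) +
        (i : ZMod q) * ((a : ZMod q) * (c : ZMod q)) := by
    push_cast; ring
  rw [hcast]
  have h1 : ((b : ZMod q) + (a : ZMod q) * (n : ZMod q)) +
      (i : ZMod q) * ((a : ZMod q) * (c : ZMod q)) = 0 ↔
      (i : ZMod q) = rhoF a b c q n := by
    rw [rhoF, eq_mul_inv_iff_mul_eq₀ hA]
    constructor
    · intro h; linear_combination h
    · intro h; linear_combination h
  rw [h1]
  constructor
  · intro h
    rw [← h, ZMod.val_natCast]
  · intro h
    have h2 : ((i % q : ℕ) : ZMod q) = (i : ZMod q) := ZMod.natCast_mod i q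
    rw [← h2, h]
    exact ZMod.natCast_rightInverse _

lemma NqF_count {k a b c q : ℕ} (hq : q.Prime) (hqac : ¬ q ∣ a * c) (n : ℕ) :
    NqF k a b c q n = (k + 1 + (q - 1 - (rhoF a b c q n).val)) / q := by
  haveI : NeZero q := ⟨hq.ne_zero⟩
  unfold NqF
  rw [Finset.filter_congr (fun i _ => dvd_iff_res hq hqac n i)]
  exact count_res (k+1) q _ (ZMod.val_lt _)

lemma rhoF_surj {a b c q : ℕ} (hq : q.Prime) (hqac : ¬ q ∣ a * c) (t : ZMod q) :
    ∃ n, 1 ≤ n ∧ rhoF a b c q n = t := by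
  haveI : Fact q.Prime := ⟨hq⟩
  haveI : NeZero q := ⟨hq.ne_zero⟩
  have hA : (a : ZMod q) * (c : ZMod q) ≠ 0 := by
    intro h
    apply hqac
    have : ((a * c : ℕ) : ZMod q) = 0 := by push_cast; exact h
    exact (ZMod.natCast_eq_zero_iff _ _).mp this
  have ha : (a : ZMod q) ≠ 0 := fun h => hA (by rw [h, zero_mul])
  set w : ZMod q := (-(t * ((a : ZMod q) * (c : ZMod q))) - b) * (a : ZMod q)⁻¹ with hw
  refine ⟨w.val + q, by have := hq.two_le; omega, ?_⟩
  have hcast : ((w.val + q : ℕ) : ZMod q) = w := by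
    push_cast
    rw [ZMod.natCast_self, add_zero]
    exact ZMod.natCast_rightInverse _
  have hc0 : (c : ZMod q) ≠ 0 := fun h => hA (by rw [h, mul_zero])
  rw [rhoF, hcast, hw]
  field_simp
  ring

lemma Lk_pos (k : ℕ) : 0 < Lk k :=
  finset_lcm_pos _ _ (fun i hi => by simp only [Finset.mem_Icc] at hi; simp only [id]; omega)

lemma dvd_Lk {i k : ℕ} (h1 : 1 ≤ i) (h2 : i ≤ k) : i ∣ Lk k :=
  Finset.dvd_lcm (by simp [Finset.mem_Icc]; omega)

lemma prime_le_of_dvd_Lk {q k : ℕ} (hq : q.Prime) (h : q ∣ Lk k) : q ≤ k := by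
  obtain ⟨i, hi, hdi⟩ := (prime_dvd_finset_lcm hq _ _).mp h
  simp only [Finset.mem_Icc] at hi
  simp only [id] at hdi
  have := Nat.le_of_dvd (by omega) hdi
  omega

def WS (k a c : ℕ) : Finset ℕ := (a * c * Lk k).primeFactors

def hqF (p k a b c q n : ℕ) : ℕ := (q - 1).factorization p * (NqF k a b c q n - 1)

def FfF (p k a b c n : ℕ) : ℕ :=
  k * ((Nat.gcd a b).factorization p - 1) + ∑ q ∈ WS k a c, hqF p k a b c q n

lemma stepA {p : ℕ} (hp : p.Prime) (k a b c n : ℕ) (hpos : ∀ i, 0 < b + a * (n + i * c)) :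
    padicValRat p (gkphi k a b c n) =
      ((∑ i ∈ Finset.range (k+1), ((b + a * (n + i * c)).totient.factorization p) : ℕ) : ℤ)
        - (((((Finset.range (k+1)).lcm fun i => b + a * (n + i * c))).totient.factorization p : ℕ) : ℤ) := by
  haveI : Fact p.Prime := ⟨hp⟩
  have hL0 : 0 < (Finset.range (k+1)).lcm fun i => b + a * (n + i * c) :=
    finset_lcm_pos _ _ (fun i _ => hpos i)
  have htpos : ∀ i, 0 < (b + a * (n + i * c)).totient := fun i => Nat.totient_pos.mpr (hpos i)
  have hnum : (∏ i ∈ Finset.range (k+1), (((b + a * (n + i * c)).totient : ℕ) : ℚ)) =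
      ((∏ i ∈ Finset.range (k+1), (b + a * (n + i * c)).totient : ℕ) : ℚ) := by push_cast; rfl
  rw [gkphi, hnum]
  rw [padicValRat.div
    (by
      rw [Ne, Nat.cast_eq_zero, Finset.prod_eq_zero_iff]
      rintro ⟨i, -, hi⟩; exact (htpos i).ne' hi)
    (by
      rw [Ne, Nat.cast_eq_zero]
      exact (Nat.totient_pos.mpr hL0).ne')]
  rw [padicValRat.of_nat, padicValRat.of_nat]
  have h1 : padicValNat p (∏ i ∈ Finset.range (k+1), (b + a * (n + i * c)).totient) =
      ∑ i ∈ Finset.range (k+1), ((b + a * (n + i * c)).totient.factorization p) := by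
    rw [← Nat.factorization_def _ hp]
    have hfp := Nat.factorization_prod
      (S := Finset.range (k+1)) (g := fun i => (b + a * (n + i * c)).totient)
      (fun i _ => (htpos i).ne')
    have := DFunLike.congr_fun hfp p
    rw [this, Finset.sum_apply']
  have h2 : padicValNat p (((Finset.range (k+1)).lcm fun i => b + a * (n + i * c)).totient) =
      (((Finset.range (k+1)).lcm fun i => b + a * (n + i * c)).totient.factorization p) :=
    (Nat.factorization_def _ hp).symm
  rw [h1, h2]

lemma FfF_def (p k a b c n : ℕ) : FfF p k a b c n =
    k * ((Nat.gcd a b).factorization p - 1) + ∑ q ∈ WS k a c, hqF p k a b c q n := rfl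

lemma hqF_def (p k a b c q n : ℕ) :
    hqF p k a b c q n = (q - 1).factorization p * (NqF k a b c q n - 1) := rfl

lemma stepB {p k a b c n : ℕ} (hp : p.Prime) (hk : 1 ≤ k) (ha : 1 ≤ a) (hb : 1 ≤ b)
    (hc : 1 ≤ c) (hpa' : p ∣ a / Nat.gcd a b) :
    ∑ i ∈ Finset.range (k+1), ((b + a * (n + i * c)).totient.factorization p) =
      (((Finset.range (k+1)).lcm fun i => b + a * (n + i * c)).totient.factorization p)
        + FfF p k a b c n := by
  classical
  have hd0 : 0 < Nat.gcd a b := Nat.gcd_pos_of_pos_left _ ha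
  set d := Nat.gcd a b with hd
  set e := d.factorization p with he
  have hda : d ∣ a := Nat.gcd_dvd_left a b
  have hdb : d ∣ b := Nat.gcd_dvd_right a b
  have haa : a = d * (a / d) := (Nat.mul_div_cancel' hda).symm
  have hbb : b = d * (b / d) := (Nat.mul_div_cancel' hdb).symm
  have hb'pos : 0 < b / d := Nat.div_pos (Nat.le_of_dvd (by omega) hdb) hd0
  have hco : Nat.Coprime (a / d) (b / d) := Nat.coprime_div_gcd_div_gcd hd0
  have hpb' : ¬ p ∣ b / d := by
    intro h
    have h2 : p ∣ Nat.gcd (a / d) (b / d) := Nat.dvd_gcd hpa' h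
    rw [Nat.Coprime] at hco
    rw [hco] at h2
    exact hp.one_lt.ne' (Nat.eq_one_of_dvd_one h2)
  have hpos : ∀ i, 0 < b + a * (n + i * c) := fun i => by omega
  have hxfact : ∀ i, (b + a * (n + i * c)).factorization p = e := by
    intro i
    have hy : b + a * (n + i * c) = d * (b / d + (a / d) * (n + i * c)) := by
      conv_lhs => rw [haa, hbb]
      ring
    have hynd : ¬ p ∣ (b / d + (a / d) * (n + i * c)) := by
      intro hdv
      apply hpb'
      have h2 : p ∣ (a / d) * (n + i * c) := Dvd.dvd.mul_right hpa' _
      have h3 := Nat.dvd_sub hdv h2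
      rwa [Nat.add_sub_cancel] at h3
    rw [hy, Nat.factorization_mul (by omega) (by omega), Finsupp.add_apply,
      Nat.factorization_eq_zero_of_not_dvd hynd, add_zero]
  set L := (Finset.range (k+1)).lcm (fun i => b + a * (n + i * c)) with hL
  have hL0 : 0 < L := finset_lcm_pos _ _ (fun i _ => hpos i)
  have hLfact : L.factorization p = e :=
    finset_lcm_factorization_eq _ _ ⟨0, by simp⟩ (fun i _ => (hpos i).ne') (fun i _ => hxfact i)
  have hxdvdL : ∀ i ∈ Finset.range (k+1), (b + a * (n + i * c)) ∣ L :=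
    fun i hi => Finset.dvd_lcm hi
  have hpfx : ∀ i ∈ Finset.range (k+1),
      (b + a * (n + i * c)).primeFactors
        = L.primeFactors.filter (fun q => q ∣ b + a * (n + i * c)) := by
    intro i hi
    ext q
    simp only [Nat.mem_primeFactors, Finset.mem_filter]
    constructor
    · rintro ⟨hq, hdvd, h0⟩
      exact ⟨⟨hq, hdvd.trans (hxdvdL i hi), hL0.ne'⟩, hdvd⟩
    · rintro ⟨⟨hq, -, -⟩, hdvd⟩
      exact ⟨hq, hdvd, (hpos i).ne'⟩
  have hLHS : ∑ i ∈ Finset.range (k+1), ((b + a * (n + i * c)).totient.factorization p)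
      = (k+1) * (e - 1)
        + ∑ q ∈ L.primeFactors, (q-1).factorization p * NqF k a b c q n := by
    have h1 : ∀ i ∈ Finset.range (k+1), ((b + a * (n + i * c)).totient.factorization p)
        = (e - 1) + ∑ q ∈ L.primeFactors,
            (if q ∣ b + a * (n + i * c) then (q-1).factorization p else 0) := by
      intro i hi
      rw [totient_fact hp (hpos i).ne', hxfact i, hpfx i hi, Finset.sum_filter]
    rw [Finset.sum_congr rfl h1, Finset.sum_add_distrib, Finset.sum_const,
      Finset.card_range, smul_eq_mul]
    congr 1
    rw [Finset.sum_comm]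
    apply Finset.sum_congr rfl
    intro q _
    rw [← Finset.sum_filter, Finset.sum_const, smul_eq_mul, NqF]
    ring
  have hRHS1 : (L.totient.factorization p)
      = (e - 1) + ∑ q ∈ L.primeFactors, (q-1).factorization p := by
    rw [totient_fact hp hL0.ne', hLfact]
  have hNge1 : ∀ q ∈ L.primeFactors, 1 ≤ NqF k a b c q n := by
    intro q hq
    obtain ⟨hqp, hqd, -⟩ := Nat.mem_primeFactors.mp hq
    obtain ⟨i, hi, hdi⟩ := (prime_dvd_finset_lcm hqp _ _).mp hqd
    rw [NqF]
    exact Finset.card_pos.mpr ⟨i, Finset.mem_filter.mpr ⟨hi, hdi⟩⟩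
  have hacL0 : a * c * Lk k ≠ 0 := by
    have := Lk_pos k
    positivity
  have hz1 : ∀ q ∈ L.primeFactors ∪ WS k a c, q ∉ L.primeFactors →
      hqF p k a b c q n = 0 := by
    intro q hq hnq
    have hqW : q ∈ WS k a c := by
      rcases Finset.mem_union.mp hq with h | h
      · exact absurd h hnq
      · exact h
    obtain ⟨hqp, -, -⟩ := Nat.mem_primeFactors.mp hqW
    have hqndL : ¬ q ∣ L := by
      intro hdvd
      exact hnq (Nat.mem_primeFactors.mpr ⟨hqp, hdvd, hL0.ne'⟩)
    have hN0 : NqF k a b c q n = 0 := by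
      rw [NqF, Finset.card_eq_zero, Finset.filter_eq_empty_iff]
      intro i hi hdvd
      exact hqndL (hdvd.trans (hxdvdL i hi))
    rw [hqF_def, hN0]
    simp
  have hz2 : ∀ q ∈ L.primeFactors ∪ WS k a c, q ∉ WS k a c →
      hqF p k a b c q n = 0 := by
    intro q hq hnq
    have hqL : q ∈ L.primeFactors := by
      rcases Finset.mem_union.mp hq with h | h
      · exact h
      · exact absurd h hnq
    obtain ⟨hqp, -, -⟩ := Nat.mem_primeFactors.mp hqL
    have hqnd : ¬ q ∣ a * c * Lk k := by
      intro hdvd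
      exact hnq (Nat.mem_primeFactors.mpr ⟨hqp, hdvd, hacL0⟩)
    have hNle1 : NqF k a b c q n ≤ 1 := by
      rw [NqF]
      apply Finset.card_le_one.mpr
      intro i hi j hj
      simp only [Finset.mem_filter, Finset.mem_range] at hi hj
      have key : ∀ i' j', i' < k+1 → j' < k+1 → i' ≤ j' →
          q ∣ b + a*(n+i'*c) → q ∣ b + a*(n+j'*c) → i' = j' := by
        intro i' j' hi' hj' hle hd1 hd2
        obtain ⟨m, rfl⟩ : ∃ m, j' = i' + m := ⟨j' - i', by omega⟩
        have hxe : b + a*(n+(i'+m)*c) = (b + a*(n+i'*c)) + a*c*m := by ring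
        rw [hxe] at hd2
        have hm : q ∣ a*c*m := (Nat.dvd_add_right hd1).mp hd2
        rcases Nat.eq_zero_or_pos m with rfl | hm0
        · omega
        exfalso
        rcases (Nat.Prime.dvd_mul hqp).mp hm with h | h
        · exact hqnd (h.mul_right _)
        · have : q ∣ Lk k := h.trans (dvd_Lk hm0 (by omega))
          exact hqnd (this.mul_left _)
      rcases le_total i j with h | h
      · exact key i j hi.1 hj.1 h hi.2 hj.2
      · exact (key j i hj.1 hi.1 h hj.2 hi.2).symm
    rw [hqF_def, Nat.sub_eq_zero_of_le hNle1, Nat.mul_zero]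
  have hswap : ∑ q ∈ L.primeFactors, hqF p k a b c q n
      = ∑ q ∈ WS k a c, hqF p k a b c q n := by
    rw [Finset.sum_subset Finset.subset_union_left hz1,
      ← Finset.sum_subset Finset.subset_union_right hz2]
  have hpoint : ∀ q ∈ L.primeFactors,
      (q-1).factorization p * NqF k a b c q n
        = (q-1).factorization p + hqF p k a b c q n := by
    intro q hq
    have hN := hNge1 q hq
    rw [hqF_def]
    obtain ⟨N, hNe⟩ : ∃ N, NqF k a b c q n = N + 1 := ⟨NqF k a b c q n - 1, by omega⟩
    rw [hNe, Nat.add_sub_cancel, Nat.mul_add, Nat.mul_one, Nat.add_comm]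
  rw [hLHS, hRHS1, FfF_def, ← hd, ← he, ← hswap]
  have hsum : ∑ q ∈ L.primeFactors, (q-1).factorization p * NqF k a b c q n
      = (∑ q ∈ L.primeFactors, (q-1).factorization p)
        + ∑ q ∈ L.primeFactors, hqF p k a b c q n := by
    rw [← Finset.sum_add_distrib]
    exact Finset.sum_congr rfl hpoint
  rw [hsum]
  have hsplit : (k+1) * (e - 1) = (e - 1) + k * (e - 1) := by ring
  omega

lemma master {p k a b c : ℕ} (hp : p.Prime) (hk : 1 ≤ k) (ha : 1 ≤ a) (hb : 1 ≤ b)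
    (hc : 1 ≤ c) (hpa' : p ∣ a / Nat.gcd a b) (n : ℕ) :
    padicValRat p (gkphi k a b c n) = (FfF p k a b c n : ℤ) := by
  have hpos : ∀ i, 0 < b + a * (n + i * c) := fun i => by omega
  rw [stepA hp k a b c n hpos]
  have := stepB (n := n) hp hk ha hb hc hpa'
  omega

def AS (p k a c : ℕ) : Finset ℕ :=
  (Lk k).divisors.filter
    (fun q => q.Prime ∧ ¬ q ∣ a * c ∧ p ∣ (q - 1) ∧ ¬ q ∣ (k + 1))

def BS (p a c : ℕ) : Finset ℕ :=
  c.divisors.filter (fun q => q.Prime ∧ ¬ q ∣ a ∧ p ∣ (q - 1))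

lemma hq_per {p k a b c q T : ℕ} (hqT : q ∣ T) (n : ℕ) :
    hqF p k a b c q (n + T) = hqF p k a b c q n := by
  obtain ⟨t, rfl⟩ := hqT
  rw [hqF_def, hqF_def, NqF_mod (m := n) (by rw [Nat.add_mul_mod_self_left])]

/-- If q ∣ c and q ∤ a then NqF is an indicator times (k+1). -/
lemma NqF_of_dvd_c {k a b c q : ℕ} (hqc : q ∣ c) (n : ℕ) :
    NqF k a b c q n = if q ∣ b + a * n then k + 1 else 0 := by
  have hiff : ∀ i, (q ∣ b + a * (n + i * c)) ↔ q ∣ b + a * n := by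
    intro i
    have he : b + a * (n + i * c) = (b + a * n) + a * i * c := by ring
    have hd : q ∣ a * i * c := Dvd.dvd.mul_left hqc _
    rw [he]
    constructor
    · intro h
      have := Nat.dvd_sub h hd
      rwa [Nat.add_sub_cancel] at this
    · intro h
      exact Nat.dvd_add h hd
  rw [NqF]
  by_cases h : q ∣ b + a * n
  · rw [if_pos h, Finset.filter_true_of_mem (fun i _ => (hiff i).mpr h), Finset.card_range]
  · rw [if_neg h, Finset.card_eq_zero, Finset.filter_eq_empty_iff]
    intro i _
    rw [hiff i]
    exact h

lemma hq_const {p k a b c : ℕ} (hp : p.Prime) (hk : 1 ≤ k) (ha : 1 ≤ a) (hc : 1 ≤ c)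
    {q : ℕ} (hqW : q ∈ WS k a c) (hqA : q ∉ AS p k a c) (hqB : q ∉ BS p a c) :
    ∀ n m, hqF p k a b c q n = hqF p k a b c q m := by
  intro n m
  obtain ⟨hqp, hqd, -⟩ := Nat.mem_primeFactors.mp hqW
  by_cases hpq1 : p ∣ (q - 1)
  swap
  · rw [hqF_def, hqF_def, Nat.factorization_eq_zero_of_not_dvd hpq1, zero_mul, zero_mul]
  suffices hN : NqF k a b c q n = NqF k a b c q m by rw [hqF_def, hqF_def, hN]
  by_cases hqa : q ∣ a
  · by_cases hqb : q ∣ b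
    · have hall : ∀ j, NqF k a b c q j = k + 1 := by
        intro j
        rw [NqF, Finset.filter_true_of_mem (fun i _ => Nat.dvd_add hqb (hqa.mul_right _)),
          Finset.card_range]
      rw [hall, hall]
    · have hall : ∀ j, NqF k a b c q j = 0 := by
        intro j
        rw [NqF, Finset.card_eq_zero, Finset.filter_eq_empty_iff]
        intro i _ hdvd
        apply hqb
        have h2 := Nat.dvd_sub hdvd (hqa.mul_right (j + i * c))
        rwa [Nat.add_sub_cancel] at h2
      rw [hall, hall]
  · by_cases hqc : q ∣ c
    · exfalso
      apply hqB
      rw [BS, Finset.mem_filter, Nat.mem_divisors]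
      exact ⟨⟨hqc, by omega⟩, hqp, hqa, hpq1⟩
    · have hqac : ¬ q ∣ a * c := by
        intro h
        rcases (Nat.Prime.dvd_mul hqp).mp h with h | h
        · exact hqa h
        · exact hqc h
      have hqLk : q ∣ Lk k := by
        rcases (Nat.Prime.dvd_mul hqp).mp hqd with h | h
        · exact absurd h hqac
        · exact h
      by_cases hqk1 : q ∣ (k + 1)
      · -- constant count (k+1)/q
        obtain ⟨M, hM⟩ := hqk1
        have hq0 : 0 < q := hqp.pos
        have hall : ∀ j, NqF k a b c q j = M := by
          intro j
          haveI : NeZero q := ⟨hqp.ne_zero⟩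
          rw [NqF_count hqp hqac j]
          have hlt : q - 1 - (rhoF a b c q j).val < q := by
            have := ZMod.val_lt (rhoF a b c q j)
            omega
          rw [hM, Nat.mul_add_div hq0, Nat.div_eq_of_lt hlt, Nat.add_zero]
        rw [hall, hall]
      · exfalso
        apply hqA
        rw [AS, Finset.mem_filter, Nat.mem_divisors]
        exact ⟨⟨hqLk, (Lk_pos k).ne'⟩, hqp, hqac, hpq1, hqk1⟩

lemma witness_B {p k a b c : ℕ} (hp : p.Prime) (hk : 1 ≤ k) (ha : 1 ≤ a) (hc : 1 ≤ c)
    {q : ℕ} (hqB : q ∈ BS p a c) :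
    ∃ n₁ n₂, 1 ≤ n₁ ∧ 1 ≤ n₂ ∧ hqF p k a b c q n₁ ≠ hqF p k a b c q n₂ := by
  rw [BS, Finset.mem_filter, Nat.mem_divisors] at hqB
  obtain ⟨⟨hqc, -⟩, hqp, hqa, hpq1⟩ := hqB
  haveI : Fact q.Prime := ⟨hqp⟩
  haveI : NeZero q := ⟨hqp.ne_zero⟩
  have hv : 0 < (q - 1).factorization p :=
    hp.factorization_pos_of_dvd (by have := hqp.two_le; omega) hpq1
  have ha0 : (a : ZMod q) ≠ 0 := by
    intro h
    exact hqa ((ZMod.natCast_eq_zero_iff _ _).mp h)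
  set w : ZMod q := (-(b : ZMod q)) * (a : ZMod q)⁻¹ with hw
  set n₁ := w.val + q with hn₁
  have hcast : ((n₁ : ℕ) : ZMod q) = w := by
    rw [hn₁]
    push_cast
    rw [ZMod.natCast_self, add_zero]
    exact ZMod.natCast_rightInverse _
  have hd1 : q ∣ b + a * n₁ := by
    rw [← ZMod.natCast_eq_zero_iff]
    push_cast
    rw [hcast, hw]
    field_simp
    ring
  have hd2 : ¬ q ∣ b + a * (n₁ + 1) := by
    intro h
    have he : b + a * (n₁ + 1) = (b + a * n₁) + a := by ring
    rw [he] at h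
    have h2 := Nat.dvd_sub h hd1
    rw [Nat.add_sub_cancel_left] at h2
    exact hqa h2
  refine ⟨n₁, n₁ + 1, by have := hqp.two_le; omega, by omega, ?_⟩
  rw [hqF_def, hqF_def, NqF_of_dvd_c hqc, NqF_of_dvd_c hqc, if_pos hd1, if_neg hd2]
  have h1 : (k + 1 - 1 : ℕ) = k := by omega
  rw [h1]
  have h3 : 0 < (q - 1).factorization p * k := Nat.mul_pos hv (by omega)
  omega

lemma witness_A {p k a b c : ℕ} (hp : p.Prime) (hk : 1 ≤ k) (ha : 1 ≤ a) (hc : 1 ≤ c)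
    {q : ℕ} (hqA : q ∈ AS p k a c) :
    ∃ n₁ n₂, 1 ≤ n₁ ∧ 1 ≤ n₂ ∧ hqF p k a b c q n₁ ≠ hqF p k a b c q n₂ := by
  rw [AS, Finset.mem_filter, Nat.mem_divisors] at hqA
  obtain ⟨⟨hqLk, -⟩, hqp, hqac, hpq1, hqk1⟩ := hqA
  haveI : Fact q.Prime := ⟨hqp⟩
  haveI : NeZero q := ⟨hqp.ne_zero⟩
  have hq0 : 0 < q := hqp.pos
  have hqk : q ≤ k := prime_le_of_dvd_Lk hqp hqLk
  have hv : 0 < (q - 1).factorization p :=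
    hp.factorization_pos_of_dvd (by have := hqp.two_le; omega) hpq1
  obtain ⟨n₁, hn₁, hrho₁⟩ := rhoF_surj (b := b) hqp hqac (0 : ZMod q)
  obtain ⟨n₂, hn₂, hrho₂⟩ := rhoF_surj (b := b) hqp hqac ((q - 1 : ℕ) : ZMod q)
  set m := (k + 1) / q with hm
  have hm1 : 1 ≤ m := (Nat.one_le_div_iff hq0).mpr (by omega)
  have hkq : (k + 1) / q = k / q := by
    rw [Nat.succ_div, if_neg hqk1, Nat.add_zero]
  have hN₁ : NqF k a b c q n₁ = m + 1 := by
    rw [NqF_count hqp hqac n₁, hrho₁, ZMod.val_zero]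
    have he : k + 1 + (q - 1 - 0) = k + q := by omega
    rw [he, Nat.add_div_right _ hq0, hm, hkq]
  have hN₂ : NqF k a b c q n₂ = m := by
    rw [NqF_count hqp hqac n₂, hrho₂, ZMod.val_natCast,
      Nat.mod_eq_of_lt (by omega : q - 1 < q)]
    have he : k + 1 + (q - 1 - (q - 1)) = k + 1 := by omega
    rw [he, hm]
  refine ⟨n₁, n₂, hn₁, hn₂, ?_⟩
  rw [hqF_def, hqF_def, hN₁, hN₂, Nat.add_sub_cancel]
  intro hcon
  have := Nat.eq_of_mul_eq_mul_left hv hcon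
  omega

lemma AS_subset_WS {p k a c : ℕ} (ha : 1 ≤ a) (hc : 1 ≤ c) :
    AS p k a c ⊆ WS k a c := by
  intro q hq
  rw [AS, Finset.mem_filter, Nat.mem_divisors] at hq
  obtain ⟨⟨hqLk, -⟩, hqp, -, -, -⟩ := hq
  rw [WS, Nat.mem_primeFactors]
  refine ⟨hqp, hqLk.mul_left _, ?_⟩
  have := Lk_pos k
  positivity

lemma BS_subset_WS {p k a c : ℕ} (ha : 1 ≤ a) (hc : 1 ≤ c) :
    BS p a c ⊆ WS k a c := by
  intro q hq
  rw [BS, Finset.mem_filter, Nat.mem_divisors] at hq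
  obtain ⟨⟨hqc, -⟩, hqp, -, -⟩ := hq
  rw [WS, Nat.mem_primeFactors]
  refine ⟨hqp, ((hqc.mul_left a).mul_right (Lk k)), ?_⟩
  have := Lk_pos k
  positivity

lemma AS_prime {p k a c q : ℕ} (h : q ∈ AS p k a c) : q.Prime :=
  ((Finset.mem_filter.mp h).2).1

lemma BS_prime {p a c q : ℕ} (h : q ∈ BS p a c) : q.Prime :=
  ((Finset.mem_filter.mp h).2).1

lemma AB_disjoint (p k a c : ℕ) : Disjoint (AS p k a c) (BS p a c) := by
  rw [Finset.disjoint_left]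
  intro q hqA hqB
  rw [AS, Finset.mem_filter] at hqA
  rw [BS, Finset.mem_filter, Nat.mem_divisors] at hqB
  exact hqA.2.2.1 ((hqB.1.1).mul_left a)

lemma sum_per {p k a b c : ℕ} (hp : p.Prime) (hk : 1 ≤ k) (ha : 1 ≤ a) (hc : 1 ≤ c)
    (S : Finset ℕ) (hS : S ⊆ WS k a c) (M : ℕ)
    (hM : ∀ q ∈ S, q ∈ AS p k a c ∪ BS p a c → q ∣ M) :
    PerNat (fun n => ∑ q ∈ S, hqF p k a b c q n) M := by
  intro n hn
  apply Finset.sum_congr rfl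
  intro q hq
  by_cases hU : q ∈ AS p k a c ∪ BS p a c
  · exact hq_per (hM q hq hU) n
  · rw [Finset.mem_union] at hU
    push_neg at hU
    exact hq_const hp hk ha hc (hS hq) hU.1 hU.2 (n + M) n

lemma FfF_per {p k a b c : ℕ} (hp : p.Prime) (hk : 1 ≤ k) (ha : 1 ≤ a) (hc : 1 ≤ c)
    (M : ℕ) (hM : ∀ q ∈ AS p k a c ∪ BS p a c, q ∣ M) :
    PerNat (FfF p k a b c) M := by
  intro n hn
  rw [FfF_def, FfF_def]
  congr 1
  exact sum_per hp hk ha hc _ (Finset.Subset.refl _) M (fun q _ hU => hM q hU) n hn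

/-- Lemma 3.5: for a prime `p` with `p ∣ c L_k` and `p ∣ a'` (`a' = a / gcd (a, b)`),
the smallest period of `g_{p,k,φ} (n) = v_p (g_{k,φ} (n))` is
`(∏_{q prime, q ∤ a c, q ∣ L_k, p ∣ q − 1, q ∤ k + 1} q) ⬝ (∏_{q prime, q ∤ a, q ∣ c, p ∣ q − 1} q)`. -/
theorem smallest_local_period_dvd_a' (k a b c : ℕ)
    (hk : 1 ≤ k) (ha : 1 ≤ a) (hc : 1 ≤ c)
    (d a' : ℕ) (hd : d = Nat.gcd a b) (ha' : a' = a / d)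
    (p : ℕ) (hp : p.Prime) (hpdvd : p ∣ c * Lk k) (hpa' : p ∣ a') :
    IsLeast {T : ℕ | 0 < T ∧ ∀ n : ℕ, 0 < n →
        padicValRat p (gkphi k a b c (n + T)) = padicValRat p (gkphi k a b c n)}
      ((∏ q ∈ (Lk k).divisors.filter
          (fun q => q.Prime ∧ ¬ q ∣ a * c ∧ p ∣ (q - 1) ∧ ¬ q ∣ (k + 1)), q) *
        ∏ q ∈ c.divisors.filter (fun q => q.Prime ∧ ¬ q ∣ a ∧ p ∣ (q - 1)), q) := by
  subst hd ha'
  rcases Nat.eq_zero_or_pos b with rfl | hb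
  · exfalso
    rw [Nat.gcd_zero_right, Nat.div_self (by omega)] at hpa'
    exact hp.one_lt.ne' (Nat.eq_one_of_dvd_one hpa')
  have hAeq : (Lk k).divisors.filter
      (fun q => q.Prime ∧ ¬ q ∣ a * c ∧ p ∣ (q - 1) ∧ ¬ q ∣ (k + 1)) = AS p k a c := rfl
  have hBeq : c.divisors.filter (fun q => q.Prime ∧ ¬ q ∣ a ∧ p ∣ (q - 1)) = BS p a c := rfl
  rw [hAeq, hBeq]
  set U := AS p k a c ∪ BS p a c with hU
  have hUprime : ∀ q ∈ U, q.Prime := by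
    intro q hq
    rcases Finset.mem_union.mp hq with h | h
    · exact AS_prime h
    · exact BS_prime h
  have hPeq : (∏ q ∈ AS p k a c, q) * (∏ q ∈ BS p a c, q) = ∏ q ∈ U, q :=
    (Finset.prod_union (AB_disjoint p k a c)).symm
  have hP0 : 0 < ∏ q ∈ U, q := Finset.prod_pos (fun q hq => (hUprime q hq).pos)
  have hUdvd : ∀ q ∈ U, q ∣ ∏ r ∈ U, r := fun q hq => Finset.dvd_prod_of_mem _ hq
  rw [hPeq]
  constructor
  · refine ⟨hP0, ?_⟩
    intro n hn
    rw [master hp hk ha hb hc hpa' (n + ∏ q ∈ U, q), master hp hk ha hb hc hpa' n]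
    exact_mod_cast FfF_per hp hk ha hc _ hUdvd n hn
  · intro T hT
    obtain ⟨hT0, hTper⟩ := hT
    have hFper : PerNat (FfF p k a b c) T := by
      intro n hn
      have h2 := hTper n hn
      rw [master hp hk ha hb hc hpa', master hp hk ha hb hc hpa'] at h2
      exact_mod_cast h2
    have hdvdT : ∀ q₀ ∈ U, q₀ ∣ T := by
      intro q₀ hq₀
      by_contra hq₀T
      have hq₀p : q₀.Prime := hUprime q₀ hq₀
      have hPper : PerNat (FfF p k a b c) (∏ q ∈ U, q) := FfF_per hp hk ha hc _ hUdvd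
      have hgper := perNat_gcd hFper hPper hT0 hP0
      set g := Nat.gcd T (∏ q ∈ U, q) with hg
      have hg0 : 0 < g := Nat.gcd_pos_of_pos_left _ hT0
      have hq₀g : ¬ q₀ ∣ g := fun h => hq₀T (h.trans (Nat.gcd_dvd_left _ _))
      set M := ∏ q ∈ U.erase q₀, q with hM
      have hM0 : 0 < M :=
        Finset.prod_pos (fun q hq => (hUprime q (Finset.erase_subset _ _ hq)).pos)
      have hPM : (∏ q ∈ U, q) = q₀ * M := (Finset.mul_prod_erase U _ hq₀).symm
      have hgM : g ∣ M := by
        apply Nat.Coprime.dvd_of_dvd_mul_left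
          (Nat.Coprime.symm ((Nat.Prime.coprime_iff_not_dvd hq₀p).mpr hq₀g))
        rw [← hPM]
        exact Nat.gcd_dvd_right _ _
      have hMper : PerNat (FfF p k a b c) M := perNat_of_dvd hgper hgM
      have hq₀W : q₀ ∈ WS k a c := by
        rcases Finset.mem_union.mp hq₀ with h | h
        · exact AS_subset_WS ha hc h
        · exact BS_subset_WS ha hc h
      have hGper : PerNat (fun n => ∑ q ∈ (WS k a c).erase q₀, hqF p k a b c q n) M := by
        apply sum_per hp hk ha hc _ (Finset.erase_subset _ _) M
        intro q hq hqU
        have hne : q ≠ q₀ := (Finset.mem_erase.mp hq).1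
        exact Finset.dvd_prod_of_mem _ (Finset.mem_erase.mpr ⟨hne, hqU⟩)
      have hsplit : ∀ n, FfF p k a b c n = hqF p k a b c q₀ n
          + (k * ((Nat.gcd a b).factorization p - 1)
            + ∑ q ∈ (WS k a c).erase q₀, hqF p k a b c q n) := by
        intro n
        rw [FfF_def, ← Finset.add_sum_erase _ _ hq₀W]
        ring
      have hq₀Mper : PerNat (fun n => hqF p k a b c q₀ n) M := by
        intro n hn
        have h1 := hMper n hn
        rw [hsplit, hsplit] at h1
        have h2 := hGper n hn
        simp only at h2
        show hqF p k a b c q₀ (n + M) = hqF p k a b c q₀ n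
        omega
      have hq₀q₀per : PerNat (fun n => hqF p k a b c q₀ n) q₀ :=
        fun n _ => hq_per dvd_rfl n
      have hq₀M : ¬ q₀ ∣ M := by
        intro h
        obtain ⟨r, hr, hdr⟩ := (Prime.dvd_finset_prod_iff hq₀p.prime _).mp h
        have heq : q₀ = r := (Nat.prime_dvd_prime_iff_eq hq₀p
          (hUprime r (Finset.erase_subset _ _ hr))).mp hdr
        exact (Finset.mem_erase.mp hr).1 heq.symm
      have hgcd1 : Nat.gcd q₀ M = 1 := (Nat.Prime.coprime_iff_not_dvd hq₀p).mpr hq₀M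
      have hper1 : PerNat (fun n => hqF p k a b c q₀ n) 1 := by
        have := perNat_gcd hq₀q₀per hq₀Mper hq₀p.pos hM0
        rwa [hgcd1] at this
      have hconst := perNat_one_const hper1
      obtain ⟨n₁, n₂, hn₁, hn₂, hne⟩ :
          ∃ n₁ n₂, 1 ≤ n₁ ∧ 1 ≤ n₂ ∧ hqF p k a b c q₀ n₁ ≠ hqF p k a b c q₀ n₂ := by
        rcases Finset.mem_union.mp hq₀ with h | h
        · exact witness_A hp hk ha hc h
        · exact witness_B hp hk ha hc h
      exact hne ((hconst n₁ hn₁).trans (hconst n₂ hn₂).symm)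
    have hdvd : (∏ q ∈ U, q) ∣ T :=
      Finset.prod_primes_dvd T (fun q hq => (hUprime q hq).prime) hdvdT
    exact Nat.le_of_dvd hT0 hdvd
end

section
/- For every integer k ≥ 1 there is at most one prime p such that v_p(k+1) ≥ v_p(L_k) ≥ 1; that is, if p and q are primes with v_p(k+1) ≥ v_p(L_k) ≥ 1 and v_q(k+1) ≥ v_q(L_k) ≥ 1, then p = q. -/
lemma Lk_ne_zero (k : ℕ) : Lk k ≠ 0 := by
  have hd : Lk k ∣ ∏ i ∈ Finset.Icc 1 k, i :=
    Finset.lcm_dvd fun b hb => Finset.dvd_prod_of_mem id hb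
  have hprod : (∏ i ∈ Finset.Icc 1 k, i) ≠ 0 := by
    rw [Finset.prod_ne_zero_iff]
    intro i hi; exact Nat.one_le_iff_ne_zero.mp (Finset.mem_Icc.mp hi).1
  exact fun h => hprod (Nat.eq_zero_of_zero_dvd (h ▸ hd))

lemma aux (k : ℕ) (p q : ℕ) (hp : p.Prime) (hq : q.Prime) (hne : p ≠ q)
    (hp2 : padicValNat p (Lk k) ≤ padicValNat p (k + 1))
    (hq1 : 1 ≤ padicValNat q (Lk k))
    (hq2 : padicValNat q (Lk k) ≤ padicValNat q (k + 1)) :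
    q ≤ p := by
  set a := padicValNat p (Lk k) with ha
  set b := padicValNat q (Lk k) with hb
  have hk1 : (k + 1 : ℕ) ≠ 0 := by omega
  have hpa : p ^ a ∣ k + 1 :=
    dvd_trans (pow_dvd_pow p hp2) (pow_padicValNat_dvd)
  have hqb : q ^ b ∣ k + 1 :=
    dvd_trans (pow_dvd_pow q hq2) (pow_padicValNat_dvd)
  have klt : k < p ^ (a + 1) := by
    by_contra h
    push_neg at h
    have hmem : p ^ (a + 1) ∈ Finset.Icc 1 k :=
      Finset.mem_Icc.mpr ⟨Nat.one_le_pow _ _ hp.pos, h⟩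
    have hdvd : p ^ (a + 1) ∣ Lk k := Finset.dvd_lcm hmem
    have := (hp.pow_dvd_iff_le_factorization (Lk_ne_zero k)).mp hdvd
    rw [Nat.factorization_def _ hp] at this
    omega
  have hcop : Nat.Coprime (q ^ b) (p ^ a) :=
    Nat.Coprime.pow b a ((Nat.coprime_primes hq hp).mpr (Ne.symm hne))
  have hmul : q ^ b * p ^ a ∣ k + 1 := hcop.mul_dvd_of_dvd_of_dvd hqb hpa
  have le1 : q ^ b * p ^ a ≤ k + 1 := Nat.le_of_dvd (by omega) hmul
  have le2 : k + 1 ≤ p * p ^ a := by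
    have : p ^ (a + 1) = p * p ^ a := by ring
    omega
  have hqb_le : q ^ b ≤ p :=
    Nat.le_of_mul_le_mul_right (le_trans le1 le2) (pow_pos hp.pos a)
  exact le_trans (Nat.le_self_pow (by omega) q) hqb_le

/-- (Farhi–Kane) For every `k ≥ 1` there is at most one prime `p` with
`v_p (k + 1) ≥ v_p (L_k) ≥ 1`. -/
theorem at_most_one_prime_vp_succ_ge_vp_Lk (k : ℕ) (hk : 1 ≤ k)
    (p q : ℕ) (hp : p.Prime) (hq : q.Prime)
    (hp1 : 1 ≤ padicValNat p (Lk k))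
    (hp2 : padicValNat p (Lk k) ≤ padicValNat p (k + 1))
    (hq1 : 1 ≤ padicValNat q (Lk k))
    (hq2 : padicValNat q (Lk k) ≤ padicValNat q (k + 1)) :
    p = q := by
  by_contra hne
  have h1 := aux k p q hp hq hne hp2 hq1 hq2
  have h2 := aux k q p hq hp (Ne.symm hne) hq2 hp1 hp2
  omega
end
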